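/- For any 2-monad 𝕋 = (T,m,e) on Q-Cat, lax extensions of 𝕋 to Q-Dist correspond bijectively to distributive laws of 𝕋 over the presheaf 2-monad 𝔓, via the correspondence ←(T̂φ) = λ_X·T(←φ) and λ_X = ←(T̂((y_X)_*)). In particular, under this correspondence the lax extension T̂ satisfies φ∘e_X^* ≤ e_Y^*∘T̂φ if and only if λ satisfies the lax T-unit law (d), and T̂ satisfies T̂T̂φ∘m_X^* ≤ m_Y^*∘T̂φ if and only if λ satisfies the lax T-multiplication law (e). -/
import Mathlib


/-!
Common framework: quantaloids, `Q`-categories, `Q`-functors, `Q`-distributors,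
(co)presheaf constructions, 2-monads on `Q`-Cat, lax distributive laws over the
presheaf 2-monad, and lax extensions to `Q`-Dist.
-/

set_option autoImplicit false

universe u

namespace QT

/-- A (small) quantaloid: a category enriched in complete lattices, with
composition preserving suprema in each variable. -/
structure Quantaloid : Type (u + 1) where
  Obj : Type u
  Hom : Obj → Obj → Type u
  lat : ∀ a b, CompleteLattice (Hom a b)
  comp : ∀ {a b c}, Hom b c → Hom a b → Hom a c
  idm : ∀ a, Hom a a
  comp_assoc : ∀ {a b c d} (w : Hom c d) (v : Hom b c) (u : Hom a b),
    comp (comp w v) u = comp w (comp v u)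
  comp_idm : ∀ {a b} (u : Hom a b), comp u (idm a) = u
  idm_comp : ∀ {a b} (u : Hom a b), comp (idm b) u = u
  comp_sSup : ∀ {a b c} (v : Hom b c) (S : Set (Hom a b)),
    comp v (sSup S) = ⨆ u ∈ S, comp v u
  sSup_comp : ∀ {a b c} (S : Set (Hom b c)) (u : Hom a b),
    comp (sSup S) u = ⨆ v ∈ S, comp v u

attribute [instance] Quantaloid.lat

namespace Quantaloid

variable {Q : Quantaloid.{u}}

theorem comp_iSup {a b c : Q.Obj} (v : Q.Hom b c) {ι : Sort*} (f : ι → Q.Hom a b) :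
    Q.comp v (⨆ i, f i) = ⨆ i, Q.comp v (f i) := by
  rw [iSup, Q.comp_sSup, iSup_range]

theorem iSup_comp {a b c : Q.Obj} {ι : Sort*} (f : ι → Q.Hom b c) (u : Q.Hom a b) :
    Q.comp (⨆ i, f i) u = ⨆ i, Q.comp (f i) u := by
  rw [iSup, Q.sSup_comp, iSup_range]

theorem comp_le_comp {a b c : Q.Obj} {v v' : Q.Hom b c} {u u' : Q.Hom a b}
    (hv : v ≤ v') (hu : u ≤ u') : Q.comp v u ≤ Q.comp v' u' := by
  have h1 : Q.comp v' u ≤ Q.comp v' u' := by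
    have h := Q.comp_sSup v' {u, u'}
    rw [sSup_pair, sup_eq_right.mpr hu] at h
    rw [h]
    exact le_biSup (fun x => Q.comp v' x) (Set.mem_insert _ _)
  have h2 : Q.comp v u ≤ Q.comp v' u := by
    have h := Q.sSup_comp {v, v'} u
    rw [sSup_pair, sup_eq_right.mpr hv] at h
    rw [h]
    exact le_biSup (fun x => Q.comp x u) (Set.mem_insert _ _)
  exact le_trans h2 h1

/-- Internal hom `w ↙ u` (right adjoint to `- ∘ u`). -/
def lda {a b c : Q.Obj} (w : Q.Hom a c) (u : Q.Hom a b) : Q.Hom b c :=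
  sSup {v | Q.comp v u ≤ w}

/-- Internal hom `v ↘ w` (right adjoint to `v ∘ -`). -/
def rda {a b c : Q.Obj} (v : Q.Hom b c) (w : Q.Hom a c) : Q.Hom a b :=
  sSup {u | Q.comp v u ≤ w}

theorem le_lda {a b c : Q.Obj} {v : Q.Hom b c} {u : Q.Hom a b} {w : Q.Hom a c} :
    Q.comp v u ≤ w ↔ v ≤ lda w u := by
  constructor
  · exact fun h => le_sSup h
  · intro h
    calc Q.comp v u ≤ Q.comp (lda w u) u := comp_le_comp h le_rfl
      _ ≤ w := by
          rw [lda, Q.sSup_comp]; exact iSup₂_le fun v' hv' => hv'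

theorem le_rda {a b c : Q.Obj} {v : Q.Hom b c} {u : Q.Hom a b} {w : Q.Hom a c} :
    Q.comp v u ≤ w ↔ u ≤ rda v w := by
  constructor
  · exact fun h => le_sSup h
  · intro h
    calc Q.comp v u ≤ Q.comp v (rda v w) := comp_le_comp le_rfl h
      _ ≤ w := by
          rw [rda, Q.comp_sSup]; exact iSup₂_le fun u' hu' => hu'

end Quantaloid

variable {Q : Quantaloid.{u}}

/-- `Q`-relations between families of sets indexed by the objects of `Q`
(i.e. sets over `ob Q`, presented fibrewise). -/
abbrev QRel (Q : Quantaloid.{u}) (X Y : Q.Obj → Type u) : Type u :=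
  ∀ p q, X p → Y q → Q.Hom p q

/-- Composition of `Q`-relations. -/
def QRel.comp {X Y Z : Q.Obj → Type u} (ψ : QRel Q Y Z) (φ : QRel Q X Y) : QRel Q X Z :=
  fun p r x z => ⨆ q, ⨆ y : Y q, Q.comp (ψ q r y z) (φ p q x y)

theorem QRel.comp_mono {X Y Z : Q.Obj → Type u} {ψ ψ' : QRel Q Y Z} {φ φ' : QRel Q X Y}
    (h1 : ψ ≤ ψ') (h2 : φ ≤ φ') : QRel.comp ψ φ ≤ QRel.comp ψ' φ' := by
  intro p r x z
  exact iSup_mono fun q => iSup_mono fun y =>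
    Quantaloid.comp_le_comp (h1 q r y z) (h2 p q x y)

theorem QRel.comp_assoc {W X Y Z : Q.Obj → Type u}
    (χ : QRel Q Y Z) (ψ : QRel Q X Y) (φ : QRel Q W X) :
    QRel.comp (QRel.comp χ ψ) φ = QRel.comp χ (QRel.comp ψ φ) := by
  funext p s w z
  simp only [QRel.comp, Quantaloid.iSup_comp, Quantaloid.comp_iSup]
  apply le_antisymm
  · exact iSup₂_le fun q x => iSup₂_le fun r y =>
      le_iSup_of_le r (le_iSup_of_le y (le_iSup_of_le q (le_iSup_of_le x
        (Q.comp_assoc _ _ _).le)))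
  · exact iSup₂_le fun r y => iSup₂_le fun q x =>
      le_iSup_of_le q (le_iSup_of_le x (le_iSup_of_le r (le_iSup_of_le y
        (Q.comp_assoc _ _ _).ge)))

/-- A (small) `Q`-category. -/
structure QCat (Q : Quantaloid.{u}) : Type (u + 1) where
  el : Q.Obj → Type u
  hom : QRel Q el el
  refl : ∀ p (x : el p), Q.idm p ≤ hom p p x x
  trans : QRel.comp hom hom ≤ hom

/-- Pointwise transitivity in a `Q`-category. -/
theorem QCat.hom_comp_le (X : QCat Q) {p q r : Q.Obj}
    (x : X.el p) (y : X.el q) (z : X.el r) :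
    Q.comp (X.hom q r y z) (X.hom p q x y) ≤ X.hom p r x z :=
  le_trans
    (le_iSup_of_le q (le_iSup (fun y' : X.el q => Q.comp (X.hom q r y' z) (X.hom p q x y')) y))
    (X.trans p r x z)

/-- Any `Q`-relation into a `Q`-category embeds into its post-composite with the hom. -/
theorem QRel.le_hom_comp {W : Q.Obj → Type u} {Z : QCat Q} (ρ : QRel Q W Z.el) :
    ρ ≤ QRel.comp Z.hom ρ := by
  intro p q x z
  calc ρ p q x z = Q.comp (Q.idm q) (ρ p q x z) := (Q.idm_comp _).symm
    _ ≤ Q.comp (Z.hom q q z z) (ρ p q x z) := Quantaloid.comp_le_comp (Z.refl q z) le_rfl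
    _ ≤ _ := le_iSup_of_le q
        (le_iSup (fun z' : Z.el q => Q.comp (Z.hom q q z' z) (ρ p q x z')) z)

/-- Any `Q`-relation out of a `Q`-category embeds into its pre-composite with the hom. -/
theorem QRel.le_comp_hom {X : QCat Q} {W : Q.Obj → Type u} (ρ : QRel Q X.el W) :
    ρ ≤ QRel.comp ρ X.hom := by
  intro p q x z
  calc ρ p q x z = Q.comp (ρ p q x z) (Q.idm p) := (Q.comp_idm _).symm
    _ ≤ Q.comp (ρ p q x z) (X.hom p p x x) := Quantaloid.comp_le_comp le_rfl (X.refl p x)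
    _ ≤ _ := le_iSup_of_le p
        (le_iSup (fun x' : X.el p => Q.comp (ρ p q x' z) (X.hom p p x x')) x)

/-- A `Q`-functor. -/
structure QFun (X Y : QCat Q) : Type u where
  app : ∀ p, X.el p → Y.el p
  mono : ∀ p q (x : X.el p) (x' : X.el q),
    X.hom p q x x' ≤ Y.hom p q (app p x) (app q x')

def QFun.id (X : QCat Q) : QFun X X :=
  ⟨fun _ x => x, fun _ _ _ _ => le_rfl⟩

def QFun.comp {X Y Z : QCat Q} (g : QFun Y Z) (f : QFun X Y) : QFun X Z :=
  ⟨fun p x => g.app p (f.app p x),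
   fun p q x x' => le_trans (f.mono p q x x') (g.mono p q (f.app p x) (f.app q x'))⟩

/-- The (pointwise) order of `Q`-functors. -/
instance {X Y : QCat Q} : Preorder (QFun X Y) where
  le f g := ∀ p (x : X.el p), Q.idm p ≤ Y.hom p p (f.app p x) (g.app p x)
  le_refl f p x := Y.refl p (f.app p x)
  le_trans f g h h1 h2 := by
    intro p x
    calc Q.idm p = Q.comp (Q.idm p) (Q.idm p) := (Q.comp_idm _).symm
      _ ≤ Q.comp (Y.hom p p (g.app p x) (h.app p x)) (Y.hom p p (f.app p x) (g.app p x)) :=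
          Quantaloid.comp_le_comp (h2 p x) (h1 p x)
      _ ≤ Y.hom p p (f.app p x) (h.app p x) := Y.hom_comp_le _ _ _

/-- A `Q`-distributor between `Q`-categories. -/
structure QDist (X Y : QCat Q) : Type u where
  rel : QRel Q X.el Y.el
  compat : QRel.comp Y.hom (QRel.comp rel X.hom) ≤ rel

instance {X Y : QCat Q} : PartialOrder (QDist X Y) where
  le φ ψ := φ.rel ≤ ψ.rel
  le_refl φ := le_refl φ.rel
  le_trans _ _ _ h h' := by
    intro p q x y
    exact le_trans (h p q x y) (h' p q x y)
  le_antisymm φ ψ h h' := by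
    have hr : φ.rel = ψ.rel := le_antisymm h h'
    cases φ; cases ψ; cases hr; rfl

theorem QDist.hom_comp_le {X Y : QCat Q} (φ : QDist X Y) :
    QRel.comp Y.hom φ.rel ≤ φ.rel :=
  le_trans (QRel.comp_mono le_rfl (QRel.le_comp_hom φ.rel)) φ.compat

theorem QDist.comp_hom_le {X Y : QCat Q} (φ : QDist X Y) :
    QRel.comp φ.rel X.hom ≤ φ.rel :=
  le_trans (QRel.le_hom_comp _) φ.compat

theorem QDist.rel_comp_hom {X Y : QCat Q} (φ : QDist X Y) {p q r : Q.Obj}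
    (x : X.el p) (x' : X.el q) (y : Y.el r) :
    Q.comp (φ.rel q r x' y) (X.hom p q x x') ≤ φ.rel p r x y :=
  le_trans
    (le_iSup_of_le q (le_iSup (fun x'' : X.el q => Q.comp (φ.rel q r x'' y) (X.hom p q x x'')) x'))
    (φ.comp_hom_le p r x y)

theorem QDist.hom_comp_rel {X Y : QCat Q} (φ : QDist X Y) {p q r : Q.Obj}
    (x : X.el p) (y : Y.el q) (y' : Y.el r) :
    Q.comp (Y.hom q r y y') (φ.rel p q x y) ≤ φ.rel p r x y' :=
  le_trans
    (le_iSup_of_le q (le_iSup (fun y'' : Y.el q => Q.comp (Y.hom q r y'' y') (φ.rel p q x y'')) y))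
    (φ.hom_comp_le p r x y')

/-- Composition of `Q`-distributors. -/
def QDist.comp {X Y Z : QCat Q} (ψ : QDist Y Z) (φ : QDist X Y) : QDist X Z :=
  ⟨QRel.comp ψ.rel φ.rel, by
    calc QRel.comp Z.hom (QRel.comp (QRel.comp ψ.rel φ.rel) X.hom)
        = QRel.comp (QRel.comp Z.hom ψ.rel) (QRel.comp φ.rel X.hom) := by
          rw [QRel.comp_assoc, QRel.comp_assoc]
      _ ≤ QRel.comp ψ.rel φ.rel :=
          QRel.comp_mono ψ.hom_comp_le φ.comp_hom_le⟩

/-- The identity distributor `1_X^*` on a `Q`-category. -/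
def QCat.homDist (X : QCat Q) : QDist X X :=
  ⟨X.hom, le_trans (QRel.comp_mono le_rfl X.trans) X.trans⟩

/-- The graph `f_*` of a `Q`-functor. -/
def QFun.graph {X Y : QCat Q} (f : QFun X Y) : QDist X Y :=
  ⟨fun p q x y => Y.hom p q (f.app p x) y, by
    intro p q x y
    simp only [QRel.comp, Quantaloid.comp_iSup, Quantaloid.iSup_comp]
    refine iSup₂_le fun q' y' => iSup₂_le fun p' x' => ?_
    calc Q.comp (Y.hom q' q y' y) (Q.comp (Y.hom p' q' (f.app p' x') y') (X.hom p p' x x'))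
        ≤ Q.comp (Y.hom q' q y' y)
            (Q.comp (Y.hom p' q' (f.app p' x') y') (Y.hom p p' (f.app p x) (f.app p' x'))) :=
          Quantaloid.comp_le_comp le_rfl
            (Quantaloid.comp_le_comp le_rfl (f.mono p p' x x'))
      _ ≤ Q.comp (Y.hom q' q y' y) (Y.hom p q' (f.app p x) y') :=
          Quantaloid.comp_le_comp le_rfl (Y.hom_comp_le _ _ _)
      _ ≤ Y.hom p q (f.app p x) y := Y.hom_comp_le _ _ _⟩

/-- The cograph `f^*` of a `Q`-functor. -/
def QFun.cograph {X Y : QCat Q} (f : QFun X Y) : QDist Y X :=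
  ⟨fun p q y x => Y.hom p q y (f.app q x), by
    intro p q y x
    simp only [QRel.comp, Quantaloid.comp_iSup, Quantaloid.iSup_comp]
    refine iSup₂_le fun q' x' => iSup₂_le fun p' y' => ?_
    calc Q.comp (X.hom q' q x' x) (Q.comp (Y.hom p' q' y' (f.app q' x')) (Y.hom p p' y y'))
        ≤ Q.comp (Y.hom q' q (f.app q' x') (f.app q x))
            (Q.comp (Y.hom p' q' y' (f.app q' x')) (Y.hom p p' y y')) :=
          Quantaloid.comp_le_comp (f.mono q' q x' x) le_rfl
      _ ≤ Q.comp (Y.hom q' q (f.app q' x') (f.app q x)) (Y.hom p q' y (f.app q' x')) :=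
          Quantaloid.comp_le_comp le_rfl (Y.hom_comp_le _ _ _)
      _ ≤ Y.hom p q y (f.app q x) := Y.hom_comp_le _ _ _⟩

/-- The presheaf `Q`-category `P X`. -/
def QCat.P (X : QCat Q) : QCat Q where
  el s := { σ : ∀ p, X.el p → Q.Hom p s //
    ∀ p q (x : X.el p) (x' : X.el q), Q.comp (σ q x') (X.hom p q x x') ≤ σ p x }
  hom s s' σ σ' := ⨅ p, ⨅ x : X.el p, Quantaloid.lda (σ'.1 p x) (σ.1 p x)
  refl := by
    intro s σ
    refine le_iInf fun p => le_iInf fun x => Quantaloid.le_lda.mp ?_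
    rw [Q.idm_comp]
  trans := by
    intro s s'' σ σ''
    refine iSup₂_le fun s' σ' => ?_
    refine le_iInf fun p => le_iInf fun x => Quantaloid.le_lda.mp ?_
    rw [Q.comp_assoc]
    have h1 : Q.comp (⨅ p', ⨅ x' : X.el p', Quantaloid.lda (σ'.1 p' x') (σ.1 p' x'))
        (σ.1 p x) ≤ σ'.1 p x :=
      Quantaloid.le_lda.mpr (le_trans (iInf_le _ p) (iInf_le _ x))
    have h2 : Q.comp (⨅ p', ⨅ x' : X.el p', Quantaloid.lda (σ''.1 p' x') (σ'.1 p' x'))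
        (σ'.1 p x) ≤ σ''.1 p x :=
      Quantaloid.le_lda.mpr (le_trans (iInf_le _ p) (iInf_le _ x))
    exact le_trans (Quantaloid.comp_le_comp le_rfl h1) h2

/-- The copresheaf `Q`-category `P† X`. -/
def QCat.Pd (X : QCat Q) : QCat Q where
  el s := { τ : ∀ q, X.el q → Q.Hom s q //
    ∀ p q (x : X.el p) (x' : X.el q), Q.comp (X.hom p q x x') (τ p x) ≤ τ q x' }
  hom s s' τ τ' := ⨅ q, ⨅ x : X.el q, Quantaloid.rda (τ'.1 q x) (τ.1 q x)
  refl := by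
    intro s τ
    refine le_iInf fun q => le_iInf fun x => Quantaloid.le_rda.mp ?_
    rw [Q.comp_idm]
  trans := by
    intro s s'' τ τ''
    refine iSup₂_le fun s' τ' => ?_
    refine le_iInf fun q => le_iInf fun x => Quantaloid.le_rda.mp ?_
    rw [← Q.comp_assoc]
    have h1 : Q.comp (τ''.1 q x)
        (⨅ q', ⨅ x' : X.el q', Quantaloid.rda (τ''.1 q' x') (τ'.1 q' x')) ≤ τ'.1 q x :=
      Quantaloid.le_rda.mpr (le_trans (iInf_le _ q) (iInf_le _ x))
    have h2 : Q.comp (τ'.1 q x)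
        (⨅ q', ⨅ x' : X.el q', Quantaloid.rda (τ'.1 q' x') (τ.1 q' x')) ≤ τ.1 q x :=
      Quantaloid.le_rda.mpr (le_trans (iInf_le _ q) (iInf_le _ x))
    exact le_trans (Quantaloid.comp_le_comp h1 le_rfl) h2

/-- The Yoneda embedding `y_X : X → P X`. -/
def QCat.y (X : QCat Q) : QFun X X.P where
  app p x := ⟨fun q x' => X.hom q p x' x,
    fun p' q' x1 x2 => X.hom_comp_le x1 x2 x⟩
  mono := by
    intro p q x x'
    refine le_iInf fun r => le_iInf fun x'' => Quantaloid.le_lda.mp ?_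
    exact X.hom_comp_le x'' x x'

/-- The co-Yoneda embedding `y†_X : X → P† X`. -/
def QCat.yd (X : QCat Q) : QFun X X.Pd where
  app p x := ⟨fun q x' => X.hom p q x x',
    fun p' q' x1 x2 => X.hom_comp_le x x1 x2⟩
  mono := by
    intro p q x x'
    refine le_iInf fun r => le_iInf fun x'' => Quantaloid.le_rda.mp ?_
    exact X.hom_comp_le x x' x''

/-- `φ^→ : P Y → P X`, `τ ↦ τ ∘ φ`. -/
def QDist.fwd {X Y : QCat Q} (φ : QDist X Y) : QFun Y.P X.P where
  app s τ := ⟨fun p x => ⨆ q, ⨆ y : Y.el q, Q.comp (τ.1 q y) (φ.rel p q x y), by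
    intro p q x x'
    rw [Quantaloid.iSup_comp]
    refine iSup_le fun r => ?_
    rw [Quantaloid.iSup_comp]
    refine iSup_le fun y => ?_
    rw [Q.comp_assoc]
    exact le_iSup_of_le r (le_iSup_of_le y
      (Quantaloid.comp_le_comp le_rfl (φ.rel_comp_hom x x' y)))⟩
  mono := by
    intro s s' τ τ'
    refine le_iInf fun p => le_iInf fun x => Quantaloid.le_lda.mp ?_
    rw [Quantaloid.comp_iSup]
    refine iSup_le fun r => ?_
    rw [Quantaloid.comp_iSup]
    refine iSup_le fun y => ?_
    rw [← Q.comp_assoc]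
    have h : Q.comp (Y.P.hom s s' τ τ') (τ.1 r y) ≤ τ'.1 r y :=
      Quantaloid.le_lda.mpr (le_trans (iInf_le _ r) (iInf_le _ y))
    exact le_iSup_of_le r (le_iSup_of_le y (Quantaloid.comp_le_comp h le_rfl))

/-- `φ^↞ : P† X → P† Y`, `σ ↦ φ ∘ σ`. -/
def QDist.bwd {X Y : QCat Q} (φ : QDist X Y) : QFun X.Pd Y.Pd where
  app s σ := ⟨fun q y => ⨆ p, ⨆ x : X.el p, Q.comp (φ.rel p q x y) (σ.1 p x), by
    intro p q y y'
    rw [Quantaloid.comp_iSup]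
    refine iSup_le fun r => ?_
    rw [Quantaloid.comp_iSup]
    refine iSup_le fun x => ?_
    rw [← Q.comp_assoc]
    exact le_iSup_of_le r (le_iSup_of_le x
      (Quantaloid.comp_le_comp (φ.hom_comp_rel x y y') le_rfl))⟩
  mono := by
    intro s s' σ σ'
    refine le_iInf fun q => le_iInf fun y => Quantaloid.le_rda.mp ?_
    rw [Quantaloid.iSup_comp]
    refine iSup_le fun r => ?_
    rw [Quantaloid.iSup_comp]
    refine iSup_le fun x => ?_
    rw [Q.comp_assoc]
    have h : Q.comp (σ'.1 r x) (X.Pd.hom s s' σ σ') ≤ σ.1 r x :=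
      Quantaloid.le_rda.mpr (le_trans (iInf_le _ r) (iInf_le _ x))
    exact le_iSup_of_le r (le_iSup_of_le x (Quantaloid.comp_le_comp le_rfl h))

/-- `φ_→ : P X → P Y`, `σ ↦ σ ↙ φ`. -/
def QDist.fwdr {X Y : QCat Q} (φ : QDist X Y) : QFun X.P Y.P where
  app s σ := ⟨fun q y => ⨅ p, ⨅ x : X.el p, Quantaloid.lda (σ.1 p x) (φ.rel p q x y), by
    intro q q' y y'
    refine le_iInf fun p => le_iInf fun x => Quantaloid.le_lda.mp ?_
    rw [Q.comp_assoc]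
    have h1 : Q.comp (Y.hom q q' y y') (φ.rel p q x y) ≤ φ.rel p q' x y' :=
      φ.hom_comp_rel x y y'
    have h2 : Q.comp ((⨅ p', ⨅ x' : X.el p',
        Quantaloid.lda (σ.1 p' x') (φ.rel p' q' x' y')) : Q.Hom q' s) (φ.rel p q' x y')
        ≤ σ.1 p x :=
      Quantaloid.le_lda.mpr (le_trans (iInf_le _ p) (iInf_le _ x))
    exact le_trans (Quantaloid.comp_le_comp le_rfl h1) h2⟩
  mono := by
    intro s s' σ σ'
    refine le_iInf fun q => le_iInf fun y => Quantaloid.le_lda.mp ?_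
    refine le_iInf fun p => le_iInf fun x => Quantaloid.le_lda.mp ?_
    rw [Q.comp_assoc]
    have h1 : Q.comp ((⨅ p', ⨅ x' : X.el p',
        Quantaloid.lda (σ.1 p' x') (φ.rel p' q x' y)) : Q.Hom q s) (φ.rel p q x y)
        ≤ σ.1 p x :=
      Quantaloid.le_lda.mpr (le_trans (iInf_le _ p) (iInf_le _ x))
    have h2 : Q.comp (X.P.hom s s' σ σ') (σ.1 p x) ≤ σ'.1 p x :=
      Quantaloid.le_lda.mpr (le_trans (iInf_le _ p) (iInf_le _ x))
    exact le_trans (Quantaloid.comp_le_comp le_rfl h1) h2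

/-- Isbell `φ↑ : P X → P† Y`, `σ ↦ φ ↙ σ`. -/
def QDist.up {X Y : QCat Q} (φ : QDist X Y) : QFun X.P Y.Pd where
  app s σ := ⟨fun q y => ⨅ p, ⨅ x : X.el p, Quantaloid.lda (φ.rel p q x y) (σ.1 p x), by
    intro q q' y y'
    refine le_iInf fun p => le_iInf fun x => Quantaloid.le_lda.mp ?_
    rw [Q.comp_assoc]
    have h1 : Q.comp ((⨅ p', ⨅ x' : X.el p',
        Quantaloid.lda (φ.rel p' q x' y) (σ.1 p' x')) : Q.Hom s q) (σ.1 p x)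
        ≤ φ.rel p q x y :=
      Quantaloid.le_lda.mpr (le_trans (iInf_le _ p) (iInf_le _ x))
    exact le_trans (Quantaloid.comp_le_comp le_rfl h1) (φ.hom_comp_rel x y y')⟩
  mono := by
    intro s s' σ σ'
    refine le_iInf fun q => le_iInf fun y => Quantaloid.le_rda.mp ?_
    refine le_iInf fun p => le_iInf fun x => Quantaloid.le_lda.mp ?_
    rw [Q.comp_assoc]
    have h1 : Q.comp (X.P.hom s s' σ σ') (σ.1 p x) ≤ σ'.1 p x :=
      Quantaloid.le_lda.mpr (le_trans (iInf_le _ p) (iInf_le _ x))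
    have h2 : Q.comp ((⨅ p', ⨅ x' : X.el p',
        Quantaloid.lda (φ.rel p' q x' y) (σ'.1 p' x')) : Q.Hom s' q) (σ'.1 p x)
        ≤ φ.rel p q x y :=
      Quantaloid.le_lda.mpr (le_trans (iInf_le _ p) (iInf_le _ x))
    exact le_trans (Quantaloid.comp_le_comp le_rfl h1) h2

/-- Isbell `φ↓ : P† Y → P X`, `τ ↦ τ ↘ φ`. -/
def QDist.down {X Y : QCat Q} (φ : QDist X Y) : QFun Y.Pd X.P where
  app s τ := ⟨fun p x => ⨅ q, ⨅ y : Y.el q, Quantaloid.rda (τ.1 q y) (φ.rel p q x y), by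
    intro p p' x x'
    refine le_iInf fun q => le_iInf fun y => Quantaloid.le_rda.mp ?_
    rw [← Q.comp_assoc]
    have h1 : Q.comp (τ.1 q y) ((⨅ q', ⨅ y' : Y.el q',
        Quantaloid.rda (τ.1 q' y') (φ.rel p' q' x' y')) : Q.Hom p' s)
        ≤ φ.rel p' q x' y :=
      Quantaloid.le_rda.mpr (le_trans (iInf_le _ q) (iInf_le _ y))
    exact le_trans (Quantaloid.comp_le_comp h1 le_rfl) (φ.rel_comp_hom x x' y)⟩
  mono := by
    intro s s' τ τ'
    refine le_iInf fun p => le_iInf fun x => Quantaloid.le_lda.mp ?_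
    refine le_iInf fun q => le_iInf fun y => Quantaloid.le_rda.mp ?_
    rw [← Q.comp_assoc]
    have h1 : Q.comp (τ'.1 q y) (Y.Pd.hom s s' τ τ') ≤ τ.1 q y :=
      Quantaloid.le_rda.mpr (le_trans (iInf_le _ q) (iInf_le _ y))
    have h2 : Q.comp (τ.1 q y) ((⨅ q', ⨅ y' : Y.el q',
        Quantaloid.rda (τ.1 q' y') (φ.rel p q' x y')) : Q.Hom p s)
        ≤ φ.rel p q x y :=
      Quantaloid.le_rda.mpr (le_trans (iInf_le _ q) (iInf_le _ y))
    exact le_trans (Quantaloid.comp_le_comp h1 le_rfl) h2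

/-- The transpose `←φ : Y → P X` of a distributor `φ : X ⇸ Y`. -/
def QDist.transpose {X Y : QCat Q} (φ : QDist X Y) : QFun Y X.P where
  app q y := ⟨fun p x => φ.rel p q x y,
    fun p q' x x' => φ.rel_comp_hom x x' y⟩
  mono := by
    intro q q' y y'
    refine le_iInf fun p => le_iInf fun x => Quantaloid.le_lda.mp ?_
    exact φ.hom_comp_rel x y y'

/-- The inverse of transposition. -/
def QFun.untranspose {X Y : QCat Q} (g : QFun Y X.P) : QDist X Y :=
  ⟨fun p q x y => (g.app q y).1 p x, by
    intro p q x y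
    simp only [QRel.comp, Quantaloid.comp_iSup, Quantaloid.iSup_comp]
    refine iSup₂_le fun q' y' => iSup₂_le fun p' x' => ?_
    have h1 : Q.comp ((g.app q' y').1 p' x') (X.hom p p' x x') ≤ (g.app q' y').1 p x :=
      (g.app q' y').2 p p' x x'
    have h2 : Q.comp (Y.hom q' q y' y) ((g.app q' y').1 p x) ≤ (g.app q y).1 p x :=
      Quantaloid.le_lda.mpr
        (le_trans (g.mono q' q y' y) (le_trans (iInf_le _ p) (iInf_le _ x)))
    exact le_trans (Quantaloid.comp_le_comp le_rfl h1) h2⟩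

/-- `f_! := (f^*)^→ : P X → P Y`. -/
def pshf {X Y : QCat Q} (f : QFun X Y) : QFun X.P Y.P := f.cograph.fwd

/-- `f^! := (f_*)^→ : P Y → P X`. -/
def pshb {X Y : QCat Q} (f : QFun X Y) : QFun Y.P X.P := f.graph.fwd

/-- `f_† := (f_*)^↞ : P† X → P† Y`. -/
def cpsf {X Y : QCat Q} (f : QFun X Y) : QFun X.Pd Y.Pd := f.graph.bwd

/-- `f^† := (f^*)^↞ : P† Y → P† X`. -/
def cpsb {X Y : QCat Q} (f : QFun X Y) : QFun Y.Pd X.Pd := f.cograph.bwd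

/-- `sup_{P X} = y_X^! : P P X → P X`: the multiplication of the presheaf 2-monad. -/
def supP (X : QCat Q) : QFun X.P.P X.P := pshb X.y

/-- `inf_{P† X} = (y†_X)^† : P† P† X → P† X`: the multiplication of the copresheaf
2-monad. -/
def infPd (X : QCat Q) : QFun X.Pd.Pd X.Pd := cpsb X.yd

/-- Adjunction `f ⊣ g` in `Q`-Cat. -/
def QAdj {X Y : QCat Q} (f : QFun X Y) (g : QFun Y X) : Prop :=
  QFun.id X ≤ g.comp f ∧ f.comp g ≤ QFun.id Y

/-- Fully faithful `Q`-functors. -/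
def QFun.FullyFaithful {X Y : QCat Q} (f : QFun X Y) : Prop :=
  ∀ p q (x : X.el p) (x' : X.el q), X.hom p q x x' = Y.hom p q (f.app p x) (f.app q x')

/-- A `Q`-closure operation on a `Q`-category. -/
def IsClosureOp (Z : QCat Q) (c : QFun Z Z) : Prop :=
  QFun.id Z ≤ c ∧ c.comp c = c

/-- A 2-functor on `Q`-Cat. -/
structure TwoFunctor (Q : Quantaloid.{u}) : Type (u + 1) where
  obj : QCat Q → QCat Q
  map : ∀ {X Y : QCat Q}, QFun X Y → QFun (obj X) (obj Y)
  map_id : ∀ X : QCat Q, map (QFun.id X) = QFun.id (obj X)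
  map_comp : ∀ {X Y Z : QCat Q} (g : QFun Y Z) (f : QFun X Y),
    map (g.comp f) = (map g).comp (map f)
  map_mono : ∀ {X Y : QCat Q} {f g : QFun X Y}, f ≤ g → map f ≤ map g

/-- A 2-monad on `Q`-Cat. -/
structure TwoMonad (Q : Quantaloid.{u}) extends TwoFunctor Q where
  unit : ∀ X : QCat Q, QFun X (obj X)
  mult : ∀ X : QCat Q, QFun (obj (obj X)) (obj X)
  unit_nat : ∀ {X Y : QCat Q} (f : QFun X Y), (unit Y).comp f = (map f).comp (unit X)
  mult_nat : ∀ {X Y : QCat Q} (f : QFun X Y),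
    (mult Y).comp (map (map f)) = (map f).comp (mult X)
  mult_unit : ∀ X : QCat Q, (mult X).comp (unit (obj X)) = QFun.id (obj X)
  mult_map_unit : ∀ X : QCat Q, (mult X).comp (map (unit X)) = QFun.id (obj X)
  mult_assoc : ∀ X : QCat Q, (mult X).comp (map (mult X)) = (mult X).comp (mult (obj X))

/-- The type of families `λ_X : T P X → P T X`. -/
abbrev LamFamily (T : TwoFunctor Q) : Type (u + 1) :=
  ∀ X : QCat Q, QFun (T.obj X.P) ((T.obj X).P)

/-- Lax naturality law (a): `(Tf)_! ∘ λ_X ≤ λ_Y ∘ T(f_!)`. -/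
def LawA (T : TwoFunctor Q) (lam : LamFamily T) : Prop :=
  ∀ (X Y : QCat Q) (f : QFun X Y),
    (pshf (T.map f)).comp (lam X) ≤ (lam Y).comp (T.map (pshf f))

/-- Lax `P`-unit law (b): `y_{TX} ≤ λ_X ∘ T y_X`. -/
def LawB (T : TwoFunctor Q) (lam : LamFamily T) : Prop :=
  ∀ X : QCat Q, QCat.y (T.obj X) ≤ (lam X).comp (T.map X.y)

/-- The `P`-unit law (b) holding strictly (flatness). -/
def LawBstrict (T : TwoFunctor Q) (lam : LamFamily T) : Prop :=
  ∀ X : QCat Q, (lam X).comp (T.map X.y) = QCat.y (T.obj X)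

/-- Lax `P`-multiplication law (c): `s_{TX} ∘ (λ_X)_! ∘ λ_{PX} ≤ λ_X ∘ T s_X`. -/
def LawC (T : TwoFunctor Q) (lam : LamFamily T) : Prop :=
  ∀ X : QCat Q,
    (supP (T.obj X)).comp ((pshf (lam X)).comp (lam X.P)) ≤ (lam X).comp (T.map (supP X))

/-- Lax `T`-unit law (d): `(e_X)_! ≤ λ_X ∘ e_{PX}`. -/
def LawD (M : TwoMonad Q) (lam : LamFamily M.toTwoFunctor) : Prop :=
  ∀ X : QCat Q, pshf (M.unit X) ≤ (lam X).comp (M.unit X.P)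

/-- Lax `T`-multiplication law (e): `(m_X)_! ∘ λ_{TX} ∘ T λ_X ≤ λ_X ∘ m_{PX}`. -/
def LawE (M : TwoMonad Q) (lam : LamFamily M.toTwoFunctor) : Prop :=
  ∀ X : QCat Q,
    (pshf (M.mult X)).comp ((lam (M.obj X)).comp (M.map (lam X))) ≤ (lam X).comp (M.mult X.P)

def IsDistLawABC (T : TwoFunctor Q) (lam : LamFamily T) : Prop :=
  LawA T lam ∧ LawB T lam ∧ LawC T lam

/-- A (lax) distributive law of the 2-monad `M` over the presheaf 2-monad. -/
def IsDistLaw (M : TwoMonad Q) (lam : LamFamily M.toTwoFunctor) : Prop :=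
  IsDistLawABC M.toTwoFunctor lam ∧ LawD M lam ∧ LawE M lam

/-- A flat distributive law: (b) holds strictly. -/
def IsFlatDistLaw (M : TwoMonad Q) (lam : LamFamily M.toTwoFunctor) : Prop :=
  IsDistLaw M lam ∧ LawBstrict M.toTwoFunctor lam

/-- Lax `λ`-algebra: laws (f) and (g). -/
def IsLaxAlg (M : TwoMonad Q) (lam : LamFamily M.toTwoFunctor) (X : QCat Q)
    (p : QFun (M.obj X) X.P) : Prop :=
  X.y ≤ p.comp (M.unit X) ∧
  (supP X).comp ((pshf p).comp ((lam X).comp (M.map p))) ≤ p.comp (M.mult X)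

/-- Lax `λ`-homomorphism: law (h). -/
def IsLaxHom (M : TwoMonad Q) {X Y : QCat Q}
    (p : QFun (M.obj X) X.P) (q : QFun (M.obj Y) Y.P) (f : QFun X Y) : Prop :=
  (pshf f).comp p ≤ q.comp (M.map f)

/-- The type of families `T̂φ : TX ⇸ TY`, one for each `φ : X ⇸ Y`. -/
abbrev ExtFamily (T : TwoFunctor Q) : Type (u + 1) :=
  ∀ ⦃X Y : QCat Q⦄, QDist X Y → QDist (T.obj X) (T.obj Y)

/-- A lax extension of the 2-functor `T` to `Q`-Dist: conditions (1), (2), (3). -/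
def IsLaxExt (T : TwoFunctor Q) (ext : ExtFamily T) : Prop :=
  (∀ (X Y : QCat Q) (φ φ' : QDist X Y), φ ≤ φ' → ext φ ≤ ext φ') ∧
  (∀ (X Y Z : QCat Q) (φ : QDist X Y) (ψ : QDist Y Z), (ext ψ).comp (ext φ) ≤ ext (ψ.comp φ)) ∧
  (∀ (X Y : QCat Q) (f : QFun X Y),
    (T.map f).graph ≤ ext f.graph ∧ (T.map f).cograph ≤ ext f.cograph)

/-- Condition (4): `φ ∘ e_X^* ≤ e_Y^* ∘ T̂φ`. -/
def ExtLaw4 (M : TwoMonad Q) (ext : ExtFamily M.toTwoFunctor) : Prop :=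
  ∀ (X Y : QCat Q) (φ : QDist X Y),
    φ.comp (M.unit X).cograph ≤ ((M.unit Y).cograph).comp (ext φ)

/-- Condition (5): `T̂T̂φ ∘ m_X^* ≤ m_Y^* ∘ T̂φ`. -/
def ExtLaw5 (M : TwoMonad Q) (ext : ExtFamily M.toTwoFunctor) : Prop :=
  ∀ (X Y : QCat Q) (φ : QDist X Y),
    (ext (ext φ)).comp (M.mult X).cograph ≤ ((M.mult Y).cograph).comp (ext φ)

/-- A lax extension of the 2-monad `M` to `Q`-Dist. -/
def IsMonadLaxExt (M : TwoMonad Q) (ext : ExtFamily M.toTwoFunctor) : Prop :=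
  IsLaxExt M.toTwoFunctor ext ∧ ExtLaw4 M ext ∧ ExtLaw5 M ext

/-- Flatness of a lax extension: `T̂ 1_X^* = 1_{TX}^*`. -/
def FlatExt (T : TwoFunctor Q) (ext : ExtFamily T) : Prop :=
  ∀ X : QCat Q, ext X.homDist = (T.obj X).homDist

/-- From a lax distributive law to a lax extension: `←(T̂φ) = λ_X ∘ T(←φ)`. -/
def PhiExt (T : TwoFunctor Q) (lam : LamFamily T) : ExtFamily T :=
  fun X Y φ => QFun.untranspose ((lam X).comp (T.map φ.transpose))

/-- From a lax extension to a lax distributive law: `λ_X = ←(T̂((y_X)_*))`. -/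
def PsiLam (T : TwoFunctor Q) (ext : ExtFamily T) : LamFamily T :=
  fun X => (ext X.y.graph).transpose

/-- The canonical lax extension `T̂φ = (T ←φ)^* ∘ (T y_X)_*`. -/
def hatExt (T : TwoFunctor Q) : ExtFamily T :=
  fun X Y φ => ((T.map φ.transpose).cograph).comp (T.map X.y).graph

/-- `λ_X = y_{PX} ∘ sup_{PX}`: the flat distributive law of `P` over itself. -/
def lamP (X : QCat Q) : QFun X.P.P X.P.P := (QCat.y X.P).comp (supP X)

/-- `λ†_X = ((y_X)_†)^! ∘ y_{P†PX}`: the strict distributive law of `P†` over `P`. -/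
def lamd (X : QCat Q) : QFun X.P.Pd X.Pd.P := (pshb (cpsf X.y)).comp (QCat.y X.P.Pd)

/-- `Λ_X = y_{PP†X} ∘ ((y_X)_†)^!`: the flat distributive law of `P P†` over `P`. -/
def LamPPd (X : QCat Q) : QFun X.P.Pd.P X.Pd.P.P := (QCat.y X.Pd.P).comp (pshb (cpsf X.y))

/-- The multiplication `S_X = s_{P†X} ∘ (y†_{PP†X})^!` of the double presheaf 2-monad. -/
def Smult (X : QCat Q) : QFun X.Pd.P.Pd.P X.Pd.P := (supP X.Pd).comp (pshb (QCat.yd X.Pd.P))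

/-- `Λ†_X = (y_X^!)^{†!} ∘ y_{P†PPX}`: the flat distributive law of `P† P` over `P`. -/
def LamPdP (X : QCat Q) : QFun X.P.P.Pd X.P.Pd.P :=
  (pshf (cpsf (supP X))).comp (QCat.y X.P.P.Pd)

/-- The multiplication `S†_X = s†_{PX} ∘ (y_{P†PX})^†` of the double copresheaf
2-monad. -/
def Sdmult (X : QCat Q) : QFun X.P.Pd.P.Pd X.P.Pd := (infPd X.P).comp (cpsb (QCat.y X.P.Pd))

/-- Pointwise infimum of a family of `Q`-functors into a presheaf `Q`-category. -/
def QFun.iInfP {ι : Type u} {Z X : QCat Q} (F : ι → QFun Z X.P) : QFun Z X.P where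
  app s z := ⟨fun p x => ⨅ i, ((F i).app s z).1 p x, by
    intro p q x x'
    refine le_iInf fun i => ?_
    exact le_trans
      (Quantaloid.comp_le_comp (iInf_le (fun i => ((F i).app s z).1 q x') i) le_rfl)
      (((F i).app s z).2 p q x x')⟩
  mono := by
    intro s s' z z'
    refine le_iInf fun p => le_iInf fun x => Quantaloid.le_lda.mp ?_
    refine le_iInf fun i => ?_
    have h1 : Q.comp (Z.hom s s' z z') (⨅ j, ((F j).app s z).1 p x)
        ≤ Q.comp (Z.hom s s' z z') (((F i).app s z).1 p x) :=
      Quantaloid.comp_le_comp le_rfl (iInf_le _ i)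
    have h2 : Q.comp (Z.hom s s' z z') (((F i).app s z).1 p x)
        ≤ ((F i).app s' z').1 p x :=
      Quantaloid.le_lda.mpr
        (le_trans ((F i).mono s s' z z') (le_trans (iInf_le _ p) (iInf_le _ x)))
    exact le_trans h1 h2

/-! ### Auxiliary lemmas for Statement 16 -/

section Aux

open Quantaloid

theorem lda_mono {a b c : Q.Obj} {w w' : Q.Hom a c} (h : w ≤ w') (u : Q.Hom a b) :
    Quantaloid.lda w u ≤ Quantaloid.lda w' u :=
  Quantaloid.le_lda.mp (le_trans (Quantaloid.le_lda.mpr le_rfl) h)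

theorem lda_anti {a b c : Q.Obj} (w : Q.Hom a c) {u u' : Q.Hom a b} (h : u ≤ u') :
    Quantaloid.lda w u' ≤ Quantaloid.lda w u :=
  Quantaloid.le_lda.mp
    (le_trans (Quantaloid.comp_le_comp le_rfl h) (Quantaloid.le_lda.mpr le_rfl))

theorem le_Phom_iff {X : QCat Q} {s s' : Q.Obj} {σ : X.P.el s} {σ' : X.P.el s'}
    {u : Q.Hom s s'} :
    u ≤ X.P.hom s s' σ σ' ↔ ∀ p (x : X.el p), Q.comp u (σ.1 p x) ≤ σ'.1 p x := by
  constructor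
  · intro h p x
    exact Quantaloid.le_lda.mpr (le_trans h (le_trans (iInf_le _ p) (iInf_le _ x)))
  · intro h
    exact le_iInf fun p => le_iInf fun x => Quantaloid.le_lda.mp (h p x)

/-- Pointwise characterization of the order of functors into a presheaf category. -/
theorem leP_iff {Z X : QCat Q} {f g : QFun Z X.P} :
    f ≤ g ↔ ∀ s (z : Z.el s) p (x : X.el p), (f.app s z).1 p x ≤ (g.app s z).1 p x := by
  constructor
  · intro h s z p x
    have h2 := le_Phom_iff.mp (h s z) p x
    rwa [Q.idm_comp] at h2
  · intro h s z
    exact le_Phom_iff.mpr fun p x => by rw [Q.idm_comp]; exact h s z p x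

theorem QFun.ext' {X Y : QCat Q} {f g : QFun X Y} (h : f.app = g.app) : f = g := by
  cases f; cases g; cases h; rfl

theorem PFun_ext {Z X : QCat Q} {f g : QFun Z X.P}
    (h : ∀ s (z : Z.el s) p (x : X.el p), (f.app s z).1 p x = (g.app s z).1 p x) :
    f = g :=
  QFun.ext' (funext fun s => funext fun z =>
    Subtype.ext (funext fun p => funext fun x => h s z p x))

/-- The Yoneda lemma. -/
theorem yoneda {X : QCat Q} {p s : Q.Obj} (x : X.el p) (σ : X.P.el s) :
    X.P.hom p s (X.y.app p x) σ = σ.1 p x := by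
  apply le_antisymm
  · calc X.P.hom p s (X.y.app p x) σ
        = Q.comp (X.P.hom p s (X.y.app p x) σ) (Q.idm p) := (Q.comp_idm _).symm
      _ ≤ Q.comp (X.P.hom p s (X.y.app p x) σ) (X.hom p p x x) :=
          Quantaloid.comp_le_comp le_rfl (X.refl p x)
      _ ≤ σ.1 p x := le_Phom_iff.mp le_rfl p x
  · exact le_Phom_iff.mpr fun q x' => σ.2 q p x' x

theorem Phom_action {X : QCat Q} {s s' p : Q.Obj} (σ : X.P.el s) (σ' : X.P.el s')
    (x : X.el p) :
    Q.comp (X.P.hom s s' σ σ') (σ.1 p x) ≤ σ'.1 p x :=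
  le_Phom_iff.mp le_rfl p x

theorem Phom_anti_left {X : QCat Q} {s q : Q.Obj} {σ τ : X.P.el s} (σ' : X.P.el q)
    (h : ∀ p (x : X.el p), σ.1 p x ≤ τ.1 p x) :
    X.P.hom s q τ σ' ≤ X.P.hom s q σ σ' :=
  le_iInf fun p => le_iInf fun x =>
    le_trans (le_trans (iInf_le _ p) (iInf_le _ x)) (lda_anti _ (h p x))

theorem QFun.comp_le_comp {X Y Z : QCat Q} {g g' : QFun Y Z} {f f' : QFun X Y}
    (hg : g ≤ g') (hf : f ≤ f') : g.comp f ≤ g'.comp f' := by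
  intro p x
  calc Q.idm p = Q.comp (Q.idm p) (Q.idm p) := (Q.comp_idm _).symm
    _ ≤ Q.comp (Z.hom p p (g.app p (f'.app p x)) (g'.app p (f'.app p x)))
          (Z.hom p p (g.app p (f.app p x)) (g.app p (f'.app p x))) :=
        Quantaloid.comp_le_comp (hg p (f'.app p x))
          (le_trans (hf p x) (g.mono p p _ _))
    _ ≤ _ := Z.hom_comp_le _ _ _

theorem QFun.comp_id' {X Y : QCat Q} (f : QFun X Y) : f.comp (QFun.id X) = f := rfl

theorem QFun.id_comp' {X Y : QCat Q} (f : QFun X Y) : (QFun.id Y).comp f = f := rfl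

theorem QFun.comp_assoc' {W X Y Z : QCat Q} (h : QFun Y Z) (g : QFun X Y) (f : QFun W X) :
    (h.comp g).comp f = h.comp (g.comp f) := rfl

end Aux

section Aux2

theorem QDist.ext' {X Y : QCat Q} {φ ψ : QDist X Y} (h : φ.rel = ψ.rel) : φ = ψ := by
  cases φ; cases ψ; cases h; rfl

theorem QDist.comp_mono' {X Y Z : QCat Q} {ψ ψ' : QDist Y Z} {φ φ' : QDist X Y}
    (h1 : ψ ≤ ψ') (h2 : φ ≤ φ') : ψ.comp φ ≤ ψ'.comp φ' :=
  QRel.comp_mono h1 h2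

theorem QDist.comp_assoc' {W X Y Z : QCat Q} (χ : QDist Y Z) (ψ : QDist X Y)
    (φ : QDist W X) : (χ.comp ψ).comp φ = χ.comp (ψ.comp φ) :=
  QDist.ext' (QRel.comp_assoc _ _ _)

theorem comp_homDist {X Y : QCat Q} (φ : QDist X Y) : φ.comp X.homDist = φ :=
  le_antisymm φ.comp_hom_le (QRel.le_comp_hom φ.rel)

theorem homDist_comp {X Y : QCat Q} (φ : QDist X Y) : Y.homDist.comp φ = φ :=
  le_antisymm φ.hom_comp_le (QRel.le_hom_comp φ.rel)

theorem cograph_comp_rel {X Z W : QCat Q} (g : QFun W Z) (χ : QDist X Z)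
    (p q : Q.Obj) (x : X.el p) (w : W.el q) :
    ((g.cograph).comp χ).rel p q x w = χ.rel p q x (g.app q w) := by
  apply le_antisymm
  · exact iSup₂_le fun r z => χ.hom_comp_rel x z (g.app q w)
  · calc χ.rel p q x (g.app q w)
        = Q.comp (Q.idm q) (χ.rel p q x (g.app q w)) := (Q.idm_comp _).symm
      _ ≤ Q.comp (Z.hom q q (g.app q w) (g.app q w)) (χ.rel p q x (g.app q w)) :=
          Quantaloid.comp_le_comp (Z.refl _ _) le_rfl
      _ ≤ _ := le_iSup_of_le q
          (le_iSup (fun z : Z.el q => Q.comp (Z.hom q q z (g.app q w)) (χ.rel p q x z))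
            (g.app q w))

theorem comp_graph_rel {X Z W : QCat Q} (g : QFun W X) (χ : QDist X Z)
    (p q : Q.Obj) (w : W.el p) (z : Z.el q) :
    (χ.comp (g.graph)).rel p q w z = χ.rel p q (g.app p w) z := by
  apply le_antisymm
  · exact iSup₂_le fun r x => χ.rel_comp_hom (g.app p w) x z
  · calc χ.rel p q (g.app p w) z
        = Q.comp (χ.rel p q (g.app p w) z) (Q.idm p) := (Q.comp_idm _).symm
      _ ≤ Q.comp (χ.rel p q (g.app p w) z) (X.hom p p (g.app p w) (g.app p w)) :=
          Quantaloid.comp_le_comp le_rfl (X.refl _ _)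
      _ ≤ _ := le_iSup_of_le p
          (le_iSup (fun x : X.el p => Q.comp (χ.rel p q x z) (X.hom p p (g.app p w) x))
            (g.app p w))

theorem graph_le_iff {X Y : QCat Q} (g : QFun X Y) (χ : QDist X Y) :
    g.graph ≤ χ ↔ ∀ p (x : X.el p), Q.idm p ≤ χ.rel p p x (g.app p x) := by
  constructor
  · intro h p x
    exact le_trans (Y.refl p (g.app p x)) (h p p x (g.app p x))
  · intro h p q x y
    calc Y.hom p q (g.app p x) y
        = Q.comp (Y.hom p q (g.app p x) y) (Q.idm p) := (Q.comp_idm _).symm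
      _ ≤ Q.comp (Y.hom p q (g.app p x) y) (χ.rel p p x (g.app p x)) :=
          Quantaloid.comp_le_comp le_rfl (h p x)
      _ ≤ χ.rel p q x y := χ.hom_comp_rel x (g.app p x) y

theorem graph_comp_cograph_le {Y Z : QCat Q} (g : QFun Y Z) :
    (g.graph).comp (g.cograph) ≤ Z.homDist := by
  intro p q z z'
  exact iSup₂_le fun r y => Z.hom_comp_le _ _ _

theorem homDist_le_cograph_comp_graph {Y Z : QCat Q} (g : QFun Y Z) :
    Y.homDist ≤ (g.cograph).comp (g.graph) := by
  intro p q y y'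
  calc Y.hom p q y y'
      = Q.comp (Y.hom p q y y') (Q.idm p) := (Q.comp_idm _).symm
    _ ≤ Q.comp (Z.hom p q (g.app p y) (g.app q y')) (Z.hom p p (g.app p y) (g.app p y)) :=
        Quantaloid.comp_le_comp (g.mono p q y y') (Z.refl _ _)
    _ ≤ _ := le_iSup_of_le p
        (le_iSup (fun z : Z.el p => Q.comp (Z.hom p q z (g.app q y')) (Z.hom p p (g.app p y) z))
          (g.app p y))

/-- Adjunction `g_* ⊣ g^*` in `Q`-Dist, one direction. -/
theorem le_cograph_comp {A Y Z : QCat Q} (g : QFun Y Z) {χ : QDist A Y} {χ' : QDist A Z}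
    (h : (g.graph).comp χ ≤ χ') : χ ≤ (g.cograph).comp χ' := by
  calc χ = Y.homDist.comp χ := (homDist_comp χ).symm
    _ ≤ ((g.cograph).comp (g.graph)).comp χ :=
        QDist.comp_mono' (homDist_le_cograph_comp_graph g) le_rfl
    _ = (g.cograph).comp ((g.graph).comp χ) := QDist.comp_assoc' _ _ _
    _ ≤ (g.cograph).comp χ' := QDist.comp_mono' le_rfl h

theorem untranspose_transpose {X Y : QCat Q} (φ : QDist X Y) :
    φ.transpose.untranspose = φ :=
  QDist.ext' rfl

theorem transpose_untranspose {X Y : QCat Q} (g : QFun Y X.P) :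
    g.untranspose.transpose = g :=
  PFun_ext fun _ _ _ _ => rfl

theorem transpose_le_iff {X Y : QCat Q} {φ ψ : QDist X Y} :
    φ.transpose ≤ ψ.transpose ↔ φ ≤ ψ := by
  rw [leP_iff]
  constructor
  · intro h p q x y; exact h q y p x
  · intro h q y p x; exact h p q x y

theorem transpose_comp {X Y Z : QCat Q} (ψ : QDist Y Z) (φ : QDist X Y) :
    (ψ.comp φ).transpose = (φ.fwd).comp ψ.transpose :=
  PFun_ext fun _ _ _ _ => rfl

theorem fwd_comp_y {X Y : QCat Q} (χ : QDist X Y) :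
    (χ.fwd).comp Y.y = χ.transpose :=
  PFun_ext fun q y p x => le_antisymm
    (iSup₂_le fun r y' => χ.hom_comp_rel x y' y)
    (calc χ.rel p q x y = Q.comp (Q.idm q) (χ.rel p q x y) := (Q.idm_comp _).symm
       _ ≤ Q.comp (Y.hom q q y y) (χ.rel p q x y) :=
          Quantaloid.comp_le_comp (Y.refl q y) le_rfl
       _ ≤ _ := le_iSup_of_le q
          (le_iSup (fun y' : Y.el q => Q.comp (Y.hom q q y' y) (χ.rel p q x y')) y))

theorem cograph_transpose {X Y : QCat Q} (f : QFun X Y) :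
    (f.cograph).transpose = (Y.y).comp f :=
  PFun_ext fun _ _ _ _ => rfl

theorem graph_y_transpose (X : QCat Q) :
    ((X.y).graph).transpose = QFun.id X.P :=
  PFun_ext fun q σ p x => yoneda x σ

theorem untranspose_comp_eq {A B C : QCat Q} (χ : QDist A B) (g : QFun C B) :
    QFun.untranspose ((χ.transpose).comp g) = (g.cograph).comp χ :=
  QDist.ext' (by
    funext p q x w
    exact (cograph_comp_rel g χ p q x w).symm)

theorem graph_comp_le {X Y Z : QCat Q} (g : QFun Y Z) (f : QFun X Y) :
    (g.graph).comp (f.graph) ≤ (g.comp f).graph := by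
  intro p q x z
  refine iSup₂_le fun r y => ?_
  exact le_trans
    (Quantaloid.comp_le_comp le_rfl (g.mono p r (f.app p x) y))
    (Z.hom_comp_le _ _ _)

theorem pshf_comp {X Y Z : QCat Q} (g : QFun Y Z) (f : QFun X Y) :
    pshf (g.comp f) = (pshf g).comp (pshf f) := by
  refine PFun_ext fun s σ q z => le_antisymm ?_ ?_
  · refine iSup₂_le fun p x => ?_
    have h1 : σ.1 p x ≤ ((pshf f).app s σ).1 p (f.app p x) := by
      calc σ.1 p x = Q.comp (σ.1 p x) (Q.idm p) := (Q.comp_idm _).symm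
        _ ≤ Q.comp (σ.1 p x) (Y.hom p p (f.app p x) (f.app p x)) :=
            Quantaloid.comp_le_comp le_rfl (Y.refl _ _)
        _ ≤ _ := le_iSup_of_le p (le_iSup (fun x' : X.el p =>
            Q.comp (σ.1 p x') (Y.hom p p (f.app p x) (f.app p x'))) x)
    exact le_trans (Quantaloid.comp_le_comp h1 le_rfl)
      (le_iSup_of_le p (le_iSup (fun y : Y.el p =>
        Q.comp (((pshf f).app s σ).1 p y) (Z.hom q p z (g.app p y))) (f.app p x)))
  · refine iSup₂_le fun r y => ?_
    show Q.comp (⨆ p, ⨆ x : X.el p, Q.comp (σ.1 p x) (Y.hom r p y (f.app p x)))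
        (Z.hom q r z (g.app r y)) ≤ _
    rw [Quantaloid.iSup_comp]
    refine iSup_le fun p => ?_
    rw [Quantaloid.iSup_comp]
    refine iSup_le fun x => ?_
    rw [Q.comp_assoc]
    have h2 : Q.comp (Y.hom r p y (f.app p x)) (Z.hom q r z (g.app r y))
        ≤ Z.hom q p z (g.app p (f.app p x)) :=
      le_trans (Quantaloid.comp_le_comp (g.mono r p y (f.app p x)) le_rfl)
        (Z.hom_comp_le _ _ _)
    exact le_trans (Quantaloid.comp_le_comp le_rfl h2)
      (le_iSup_of_le p (le_iSup (fun x' : X.el p =>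
        Q.comp (σ.1 p x') (Z.hom q p z (g.app p (f.app p x')))) x))

theorem supP_comp_pshf {X Y : QCat Q} (g : QFun Y X.P) :
    (supP X).comp (pshf g) = (QFun.untranspose g).fwd := by
  refine PFun_ext fun s σ p x => le_antisymm ?_ ?_
  · refine iSup₂_le fun t τ => ?_
    show Q.comp (⨆ q, ⨆ y : Y.el q, Q.comp (σ.1 q y) (X.P.hom t q τ (g.app q y)))
        (X.P.hom p t (X.y.app p x) τ) ≤ _
    rw [Quantaloid.iSup_comp]
    refine iSup_le fun q => ?_
    rw [Quantaloid.iSup_comp]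
    refine iSup_le fun y => ?_
    rw [Q.comp_assoc]
    have h2 : Q.comp (X.P.hom t q τ (g.app q y)) (X.P.hom p t (X.y.app p x) τ)
        ≤ (g.app q y).1 p x := by
      have h3 : Q.comp (X.P.hom t q τ (g.app q y)) (X.P.hom p t (X.y.app p x) τ)
          ≤ X.P.hom p q (X.y.app p x) (g.app q y) := X.P.hom_comp_le _ _ _
      rwa [yoneda x (g.app q y)] at h3
    exact le_trans (Quantaloid.comp_le_comp le_rfl h2)
      (le_iSup_of_le q (le_iSup (fun y' : Y.el q =>
        Q.comp (σ.1 q y') ((g.app q y').1 p x)) y))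
  · refine iSup₂_le fun q y => ?_
    calc Q.comp (σ.1 q y) ((g.app q y).1 p x)
        = Q.comp (Q.comp (σ.1 q y) (Q.idm q)) ((g.app q y).1 p x) := by rw [Q.comp_idm]
      _ ≤ Q.comp (Q.comp (σ.1 q y) (X.P.hom q q (g.app q y) (g.app q y)))
            (X.P.hom p q (X.y.app p x) (g.app q y)) :=
          Quantaloid.comp_le_comp
            (Quantaloid.comp_le_comp le_rfl (X.P.refl q (g.app q y)))
            (yoneda x (g.app q y)).ge
      _ ≤ _ := le_iSup_of_le q (le_iSup_of_le (g.app q y)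
          (Quantaloid.comp_le_comp
            (le_iSup_of_le q (le_iSup (fun y' : Y.el q =>
              Q.comp (σ.1 q y') (X.P.hom q q (g.app q y) (g.app q y'))) y))
            le_rfl))

theorem fwd_eq {X Y : QCat Q} (φ : QDist X Y) :
    φ.fwd = (supP X).comp (pshf φ.transpose) := by
  rw [supP_comp_pshf, untranspose_transpose]

theorem le_supP_yP {X : QCat Q} {s : Q.Obj} (σ : X.P.el s) (p : Q.Obj) (x : X.el p) :
    σ.1 p x ≤ ((supP X).app s ((QCat.y X.P).app s σ)).1 p x := by
  calc σ.1 p x = Q.comp (σ.1 p x) (Q.idm p) := (Q.comp_idm _).symm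
    _ ≤ Q.comp (X.P.hom p s (X.y.app p x) σ) (X.P.hom p p (X.y.app p x) (X.y.app p x)) :=
        Quantaloid.comp_le_comp (yoneda x σ).ge (X.P.refl p (X.y.app p x))
    _ ≤ _ := le_iSup_of_le p (le_iSup (fun τ : X.P.el p =>
        Q.comp (X.P.hom p s τ σ) (X.P.hom p p (X.y.app p x) τ)) (X.y.app p x))

theorem yY_le_pshf_yX {X Y : QCat Q} (f : QFun X Y) {p q : Q.Obj}
    (x : X.el p) (y' : Y.el q) :
    Y.hom q p y' (f.app p x) ≤ ((pshf f).app p (X.y.app p x)).1 q y' := by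
  calc Y.hom q p y' (f.app p x)
      = Q.comp (Q.idm p) (Y.hom q p y' (f.app p x)) := (Q.idm_comp _).symm
    _ ≤ Q.comp (X.hom p p x x) (Y.hom q p y' (f.app p x)) :=
        Quantaloid.comp_le_comp (X.refl p x) le_rfl
    _ ≤ _ := le_iSup_of_le p (le_iSup (fun x' : X.el p =>
        Q.comp (X.hom p p x' x) (Y.hom q p y' (f.app p x'))) x)

theorem tcY_lemma {X Y : QCat Q} (φ : QDist X Y) :
    ((φ.transpose).cograph).comp ((X.y).graph) ≤ φ := by
  intro p q x y
  refine iSup₂_le fun s σ => ?_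
  have h := X.P.hom_comp_le (X.y.app p x) σ (φ.transpose.app q y)
  rw [yoneda x (φ.transpose.app q y)] at h
  exact h

theorem tgY_lemma {X Y : QCat Q} (φ : QDist X Y) :
    ((φ.transpose).graph).comp φ ≤ (X.y).graph := by
  intro p q x σ
  refine iSup₂_le fun r y => ?_
  have h1 : φ.rel p r x y ≤ X.P.hom p r (X.y.app p x) (φ.transpose.app r y) :=
    (yoneda x (φ.transpose.app r y)).ge
  exact le_trans (Quantaloid.comp_le_comp le_rfl h1) (X.P.hom_comp_le _ _ _)

end Aux2

section Monad

variable {M : TwoMonad Q}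

theorem phiExt_transpose (lam : LamFamily M.toTwoFunctor) {X Y : QCat Q} (φ : QDist X Y) :
    (PhiExt M.toTwoFunctor lam φ).transpose = (lam X).comp (M.map φ.transpose) :=
  transpose_untranspose _

theorem transL4 {X Y : QCat Q} (φ : QDist X Y) :
    (φ.comp (M.unit X).cograph).transpose = (pshf (M.unit X)).comp φ.transpose :=
  transpose_comp _ _

theorem transR4 (lam : LamFamily M.toTwoFunctor) {X Y : QCat Q} (φ : QDist X Y) :
    (((M.unit Y).cograph).comp (PhiExt M.toTwoFunctor lam φ)).transpose
      = ((lam X).comp (M.unit X.P)).comp φ.transpose := by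
  rw [transpose_comp, cograph_transpose]
  show ((PhiExt M.toTwoFunctor lam φ).fwd.comp (QCat.y (M.obj Y))).comp (M.unit Y) = _
  rw [fwd_comp_y, phiExt_transpose lam φ]
  show (lam X).comp ((M.map φ.transpose).comp (M.unit Y))
      = (lam X).comp ((M.unit X.P).comp φ.transpose)
  rw [M.unit_nat φ.transpose]

theorem law4_iff (lam : LamFamily M.toTwoFunctor) {X Y : QCat Q} (φ : QDist X Y) :
    (φ.comp (M.unit X).cograph
        ≤ ((M.unit Y).cograph).comp (PhiExt M.toTwoFunctor lam φ))
      ↔ (pshf (M.unit X)).comp φ.transpose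
        ≤ ((lam X).comp (M.unit X.P)).comp φ.transpose := by
  rw [← transpose_le_iff, transL4 φ, transR4 lam φ]

theorem transL5 (lam : LamFamily M.toTwoFunctor) {X Y : QCat Q} (φ : QDist X Y) :
    ((PhiExt M.toTwoFunctor lam (PhiExt M.toTwoFunctor lam φ)).comp
        (M.mult X).cograph).transpose
      = ((pshf (M.mult X)).comp ((lam (M.obj X)).comp (M.map (lam X)))).comp
          (M.map (M.map φ.transpose)) := by
  rw [transpose_comp, phiExt_transpose lam (PhiExt M.toTwoFunctor lam φ),
    phiExt_transpose lam φ, M.map_comp]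
  rfl

theorem transR5 (lam : LamFamily M.toTwoFunctor) {X Y : QCat Q} (φ : QDist X Y) :
    (((M.mult Y).cograph).comp (PhiExt M.toTwoFunctor lam φ)).transpose
      = ((lam X).comp (M.mult X.P)).comp (M.map (M.map φ.transpose)) := by
  rw [transpose_comp, cograph_transpose]
  show ((PhiExt M.toTwoFunctor lam φ).fwd.comp (QCat.y (M.obj Y))).comp (M.mult Y) = _
  rw [fwd_comp_y, phiExt_transpose lam φ]
  show (lam X).comp ((M.map φ.transpose).comp (M.mult Y))
      = (lam X).comp ((M.mult X.P).comp (M.map (M.map φ.transpose)))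
  rw [M.mult_nat φ.transpose]

theorem law5_iff (lam : LamFamily M.toTwoFunctor) {X Y : QCat Q} (φ : QDist X Y) :
    ((PhiExt M.toTwoFunctor lam (PhiExt M.toTwoFunctor lam φ)).comp (M.mult X).cograph
        ≤ ((M.mult Y).cograph).comp (PhiExt M.toTwoFunctor lam φ))
      ↔ ((pshf (M.mult X)).comp ((lam (M.obj X)).comp (M.map (lam X)))).comp
            (M.map (M.map φ.transpose))
        ≤ ((lam X).comp (M.mult X.P)).comp (M.map (M.map φ.transpose)) := by
  rw [← transpose_le_iff, transL5 lam φ, transR5 lam φ]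

/-- The evaluation distributor `ε_X : X ⇸ P X`, whose transpose is the identity. -/
def epsD (X : QCat Q) : QDist X X.P := QFun.untranspose (QFun.id X.P)

theorem epsD_transpose (X : QCat Q) : (epsD X).transpose = QFun.id X.P :=
  transpose_untranspose _

/-- Conjunct 5: condition (4) ⟺ law (d), condition (5) ⟺ law (e). -/
theorem conj5 (lam : LamFamily M.toTwoFunctor) :
    (ExtLaw4 M (PhiExt M.toTwoFunctor lam) ↔ LawD M lam) ∧
    (ExtLaw5 M (PhiExt M.toTwoFunctor lam) ↔ LawE M lam) := by
  constructor
  · constructor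
    · intro h4 X
      have h5 := (law4_iff lam (epsD X)).mp (h4 X X.P (epsD X))
      rwa [epsD_transpose, QFun.comp_id', QFun.comp_id'] at h5
    · intro hd X Y φ
      exact (law4_iff lam φ).mpr (QFun.comp_le_comp (hd X) le_rfl)
  · constructor
    · intro h5 X
      have h6 := (law5_iff lam (epsD X)).mp (h5 X X.P (epsD X))
      rwa [epsD_transpose, M.map_id, M.map_id, QFun.comp_id', QFun.comp_id'] at h6
    · intro he X Y φ
      exact (law5_iff lam φ).mpr (QFun.comp_le_comp (he X) le_rfl)

/-- Conjunct 3: `Ψ ∘ Φ = id`. -/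
theorem conj3 (lam : LamFamily M.toTwoFunctor) :
    PsiLam M.toTwoFunctor (PhiExt M.toTwoFunctor lam) = lam := by
  funext X
  show (PhiExt M.toTwoFunctor lam ((X.y).graph)).transpose = lam X
  rw [phiExt_transpose lam, graph_y_transpose, M.map_id, QFun.comp_id']

/-- Conjunct 4: `Φ ∘ Ψ = id`. -/
theorem conj4 (ext : ExtFamily M.toTwoFunctor) (hext : IsLaxExt M.toTwoFunctor ext)
    {X Y : QCat Q} (φ : QDist X Y) :
    PhiExt M.toTwoFunctor (PsiLam M.toTwoFunctor ext) φ = ext φ := by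
  obtain ⟨hmono, hcomp, hgc⟩ := hext
  have e1 : PhiExt M.toTwoFunctor (PsiLam M.toTwoFunctor ext) φ
      = ((M.map φ.transpose).cograph).comp (ext ((X.y).graph)) :=
    untranspose_comp_eq (ext ((X.y).graph)) (M.map φ.transpose)
  rw [e1]
  apply le_antisymm
  · calc ((M.map φ.transpose).cograph).comp (ext ((X.y).graph))
        ≤ (ext ((φ.transpose).cograph)).comp (ext ((X.y).graph)) :=
          QDist.comp_mono' (hgc Y X.P φ.transpose).2 le_rfl
      _ ≤ ext (((φ.transpose).cograph).comp ((X.y).graph)) := hcomp _ _ _ _ _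
      _ ≤ ext φ := hmono _ _ _ _ (tcY_lemma φ)
  · refine le_cograph_comp (M.map φ.transpose) ?_
    calc ((M.map φ.transpose).graph).comp (ext φ)
        ≤ (ext ((φ.transpose).graph)).comp (ext φ) :=
          QDist.comp_mono' (hgc Y X.P φ.transpose).1 le_rfl
      _ ≤ ext (((φ.transpose).graph).comp φ) := hcomp _ _ _ _ _
      _ ≤ ext ((X.y).graph) := hmono _ _ _ _ (tgY_lemma φ)

/-- Conjunct 1: a lax distributive law induces a lax extension of the monad. -/
theorem conj1 (lam : LamFamily M.toTwoFunctor) (h : IsDistLaw M lam) :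
    IsMonadLaxExt M (PhiExt M.toTwoFunctor lam) := by
  obtain ⟨⟨ha, hb, hc⟩, hd, he⟩ := h
  refine ⟨⟨?mono, ?comp2, ?gc⟩, ?l4, ?l5⟩
  case mono =>
    intro X Y φ φ' hle
    refine transpose_le_iff.mp ?_
    rw [phiExt_transpose lam φ, phiExt_transpose lam φ']
    exact QFun.comp_le_comp le_rfl (M.map_mono (transpose_le_iff.mpr hle))
  case comp2 =>
    intro X Y Z φ ψ
    refine transpose_le_iff.mp ?_
    rw [transpose_comp, phiExt_transpose lam ψ, phiExt_transpose lam (ψ.comp φ),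
      transpose_comp ψ φ, M.map_comp]
    have hK : (PhiExt M.toTwoFunctor lam φ).fwd.comp (lam Y)
        ≤ (lam X).comp (M.map (φ.fwd)) := by
      have e0 : (PhiExt M.toTwoFunctor lam φ).fwd
          = (supP (M.obj X)).comp (pshf ((lam X).comp (M.map φ.transpose))) :=
        (supP_comp_pshf _).symm
      have e1 : φ.fwd = (supP X).comp (pshf φ.transpose) := fwd_eq φ
      rw [e0, e1, M.map_comp, pshf_comp]
      have h2 : (pshf (M.map φ.transpose)).comp (lam Y)
          ≤ (lam X.P).comp (M.map (pshf φ.transpose)) := ha Y X.P φ.transpose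
      have h3 : ((supP (M.obj X)).comp ((pshf (lam X)).comp (lam X.P))).comp
            (M.map (pshf φ.transpose))
          ≤ ((lam X).comp (M.map (supP X))).comp (M.map (pshf φ.transpose)) :=
        QFun.comp_le_comp (hc X) le_rfl
      calc ((supP (M.obj X)).comp
              ((pshf (lam X)).comp (pshf (M.map φ.transpose)))).comp (lam Y)
          = ((supP (M.obj X)).comp (pshf (lam X))).comp
              ((pshf (M.map φ.transpose)).comp (lam Y)) := rfl
        _ ≤ ((supP (M.obj X)).comp (pshf (lam X))).comp
              ((lam X.P).comp (M.map (pshf φ.transpose))) :=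
            QFun.comp_le_comp le_rfl h2
        _ = ((supP (M.obj X)).comp ((pshf (lam X)).comp (lam X.P))).comp
              (M.map (pshf φ.transpose)) := rfl
        _ ≤ ((lam X).comp (M.map (supP X))).comp (M.map (pshf φ.transpose)) := h3
        _ = (lam X).comp ((M.map (supP X)).comp (M.map (pshf φ.transpose))) := rfl
    calc (PhiExt M.toTwoFunctor lam φ).fwd.comp ((lam Y).comp (M.map ψ.transpose))
        = ((PhiExt M.toTwoFunctor lam φ).fwd.comp (lam Y)).comp (M.map ψ.transpose) := rfl
      _ ≤ ((lam X).comp (M.map φ.fwd)).comp (M.map ψ.transpose) :=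
          QFun.comp_le_comp hK le_rfl
      _ = (lam X).comp ((M.map φ.fwd).comp (M.map ψ.transpose)) := rfl
  case gc =>
    intro X Y f
    constructor
    · rw [graph_le_iff]
      intro p 𝔵
      have hyb : X.y ≤ ((f.graph).transpose).comp f :=
        leP_iff.mpr fun p' x' p'' x'' => f.mono p'' p' x'' x'
      have hchain : QCat.y (M.obj X)
          ≤ ((lam X).comp (M.map ((f.graph).transpose))).comp (M.map f) := by
        refine le_trans (hb X) ?_
        have h9 := QFun.comp_le_comp (le_refl (lam X)) (M.map_mono hyb)
        rw [M.map_comp] at h9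
        exact h9
      exact le_trans ((M.obj X).refl p 𝔵) (leP_iff.mp hchain p 𝔵 p 𝔵)
    · have e : PhiExt M.toTwoFunctor lam (f.cograph)
          = QFun.untranspose ((lam Y).comp (M.map ((Y.y).comp f))) := by
        show QFun.untranspose ((lam Y).comp (M.map ((f.cograph).transpose))) = _
        rw [cograph_transpose]
      rw [e, M.map_comp]
      intro p q 𝔶 𝔵
      exact leP_iff.mp (hb Y) q ((M.map f).app q 𝔵) p 𝔶
  case l4 =>
    intro X Y φ
    exact (law4_iff lam φ).mpr (QFun.comp_le_comp (hd X) le_rfl)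
  case l5 =>
    intro X Y φ
    exact (law5_iff lam φ).mpr (QFun.comp_le_comp (he X) le_rfl)

theorem core2 {X Y : QCat Q} (f : QFun X Y) :
    ((pshf f).graph).comp (((X.y).graph).comp (f.cograph)) ≤ (Y.y).graph := by
  intro p q y τ
  refine iSup₂_le fun s σ => ?_
  show Q.comp (Y.P.hom s q ((pshf f).app s σ) τ)
      (⨆ r, ⨆ x : X.el r,
        Q.comp (X.P.hom r s (X.y.app r x) σ) (Y.hom p r y (f.app r x))) ≤ _
  rw [Quantaloid.comp_iSup]
  refine iSup_le fun r => ?_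
  rw [Quantaloid.comp_iSup]
  refine iSup_le fun x => ?_
  rw [← Q.comp_assoc]
  have hB : X.P.hom r s (X.y.app r x) σ
      ≤ Y.P.hom r s ((pshf f).app r (X.y.app r x)) ((pshf f).app s σ) :=
    (pshf f).mono r s _ σ
  have hB2 : Y.P.hom r s ((pshf f).app r (X.y.app r x)) ((pshf f).app s σ)
      ≤ Y.P.hom r s (Y.y.app r (f.app r x)) ((pshf f).app s σ) :=
    Phom_anti_left _ (fun q' y' => yY_le_pshf_yX f x y')
  have hAB : Q.comp (Y.P.hom s q ((pshf f).app s σ) τ) (X.P.hom r s (X.y.app r x) σ)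
      ≤ τ.1 r (f.app r x) := by
    have h0 : Q.comp (Y.P.hom s q ((pshf f).app s σ) τ)
        (Y.P.hom r s (Y.y.app r (f.app r x)) ((pshf f).app s σ))
        ≤ Y.P.hom r q (Y.y.app r (f.app r x)) τ := Y.P.hom_comp_le _ _ _
    rw [yoneda (f.app r x) τ] at h0
    exact le_trans (Quantaloid.comp_le_comp le_rfl (le_trans hB hB2)) h0
  refine le_trans (Quantaloid.comp_le_comp hAB le_rfl) ?_
  exact le_trans (τ.2 p r y (f.app r x)) (yoneda y τ).ge

theorem coreC (X : QCat Q) :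
    ((supP X).graph).comp (((QCat.y X.P).graph).comp ((X.y).graph)) ≤ (X.y).graph := by
  rw [← QDist.comp_assoc']
  refine le_trans (QDist.comp_mono' (graph_comp_le (supP X) (QCat.y X.P)) le_rfl) ?_
  intro p q x σ'
  refine iSup₂_le fun s σ => ?_
  have h1 : X.P.hom s q ((supP X).app s ((QCat.y X.P).app s σ)) σ' ≤ X.P.hom s q σ σ' :=
    Phom_anti_left σ' (le_supP_yP σ)
  exact le_trans (Quantaloid.comp_le_comp h1 le_rfl) (X.P.hom_comp_le _ _ _)

/-- Conjunct 2: a lax extension of the monad induces a lax distributive law. -/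
theorem conj2 (ext : ExtFamily M.toTwoFunctor) (hext : IsMonadLaxExt M ext) :
    IsDistLaw M (PsiLam M.toTwoFunctor ext) := by
  obtain ⟨⟨hmono, hcomp, hgc⟩, h4, h5⟩ := hext
  have hA : LawA M.toTwoFunctor (PsiLam M.toTwoFunctor ext) := by
    intro X Y f
    have key : (ext ((X.y).graph)).comp ((M.map f).cograph)
        ≤ ((M.map (pshf f)).cograph).comp (ext ((Y.y).graph)) := by
      refine le_cograph_comp (M.map (pshf f)) ?_
      calc ((M.map (pshf f)).graph).comp
              ((ext ((X.y).graph)).comp ((M.map f).cograph))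
          ≤ (ext ((pshf f).graph)).comp
              ((ext ((X.y).graph)).comp (ext (f.cograph))) :=
            QDist.comp_mono' (hgc _ _ (pshf f)).1
              (QDist.comp_mono' le_rfl (hgc _ _ f).2)
        _ ≤ (ext ((pshf f).graph)).comp (ext (((X.y).graph).comp (f.cograph))) :=
            QDist.comp_mono' le_rfl (hcomp _ _ _ _ _)
        _ ≤ ext (((pshf f).graph).comp (((X.y).graph).comp (f.cograph))) :=
            hcomp _ _ _ _ _
        _ ≤ ext ((Y.y).graph) := hmono _ _ _ _ (core2 f)
    refine leP_iff.mpr fun s Ξ q 𝔶 => ?_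
    have h7 := key q s 𝔶 Ξ
    rw [cograph_comp_rel] at h7
    exact h7
  have hBb : LawB M.toTwoFunctor (PsiLam M.toTwoFunctor ext) := by
    intro X
    refine leP_iff.mpr fun q 𝔵 p 𝔵' => ?_
    have h1 : ((M.map (X.y)).graph) ≤ ext ((X.y).graph) := (hgc _ _ (X.y)).1
    exact le_trans ((M.map (X.y)).mono p q 𝔵' 𝔵) (h1 p q 𝔵' ((M.map (X.y)).app q 𝔵))
  have hCc : LawC M.toTwoFunctor (PsiLam M.toTwoFunctor ext) := by
    intro X
    have e3 : (supP (M.obj X)).comp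
          ((pshf (PsiLam M.toTwoFunctor ext X)).comp (PsiLam M.toTwoFunctor ext X.P))
        = (ext ((X.y).graph)).fwd.comp (PsiLam M.toTwoFunctor ext X.P) := by
      show ((supP (M.obj X)).comp (pshf (PsiLam M.toTwoFunctor ext X))).comp
          (PsiLam M.toTwoFunctor ext X.P) = _
      rw [show PsiLam M.toTwoFunctor ext X = (ext ((X.y).graph)).transpose from rfl,
        supP_comp_pshf, untranspose_transpose]
    rw [e3]
    have key : (ext ((QCat.y X.P).graph)).comp (ext ((X.y).graph))
        ≤ ((M.map (supP X)).cograph).comp (ext ((X.y).graph)) := by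
      refine le_trans (hcomp _ _ _ _ _) ?_
      refine le_cograph_comp (M.map (supP X)) ?_
      calc ((M.map (supP X)).graph).comp
              (ext (((QCat.y X.P).graph).comp ((X.y).graph)))
          ≤ (ext ((supP X).graph)).comp
              (ext (((QCat.y X.P).graph).comp ((X.y).graph))) :=
            QDist.comp_mono' (hgc _ _ (supP X)).1 le_rfl
        _ ≤ ext (((supP X).graph).comp (((QCat.y X.P).graph).comp ((X.y).graph))) :=
            hcomp _ _ _ _ _
        _ ≤ ext ((X.y).graph) := hmono _ _ _ _ (coreC X)
    refine leP_iff.mpr fun s 𝔖 p 𝔵 => ?_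
    have h7 := key p s 𝔵 𝔖
    rw [cograph_comp_rel] at h7
    exact h7
  have h4' : ExtLaw4 M (PhiExt M.toTwoFunctor (PsiLam M.toTwoFunctor ext)) := by
    intro X Y φ
    rw [conj4 ext ⟨hmono, hcomp, hgc⟩ φ]
    exact h4 X Y φ
  have h5' : ExtLaw5 M (PhiExt M.toTwoFunctor (PsiLam M.toTwoFunctor ext)) := by
    intro X Y φ
    rw [conj4 ext ⟨hmono, hcomp, hgc⟩ φ, conj4 ext ⟨hmono, hcomp, hgc⟩ (ext φ)]
    exact h5 X Y φ
  exact ⟨⟨hA, hBb, hCc⟩,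
    ((conj5 (PsiLam M.toTwoFunctor ext)).1.mp h4'),
    ((conj5 (PsiLam M.toTwoFunctor ext)).2.mp h5')⟩

end Monad

/-- for any 2-monad `𝕋 = (T,m,e)` on `Q`-Cat, lax extensions of `𝕋`
to `Q`-Dist correspond bijectively to distributive laws of `𝕋` over the presheaf
2-monad, via `←(T̂φ) = λ_X ∘ T(←φ)` and `λ_X = ←(T̂((y_X)_*))`; in particular, under
this correspondence `T̂` satisfies (4) iff `λ` satisfies (d), and `T̂` satisfies (5)
iff `λ` satisfies (e). -/
theorem statement16 (Q : Quantaloid.{u}) (M : TwoMonad Q) :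
    (∀ lam : LamFamily M.toTwoFunctor, IsDistLaw M lam →
      IsMonadLaxExt M (PhiExt M.toTwoFunctor lam)) ∧
    (∀ ext : ExtFamily M.toTwoFunctor, IsMonadLaxExt M ext →
      IsDistLaw M (PsiLam M.toTwoFunctor ext)) ∧
    (∀ lam : LamFamily M.toTwoFunctor, IsDistLaw M lam →
      PsiLam M.toTwoFunctor (PhiExt M.toTwoFunctor lam) = lam) ∧
    (∀ ext : ExtFamily M.toTwoFunctor, IsMonadLaxExt M ext →
      ∀ (X Y : QCat Q) (φ : QDist X Y),
        PhiExt M.toTwoFunctor (PsiLam M.toTwoFunctor ext) φ = ext φ) ∧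
    (∀ lam : LamFamily M.toTwoFunctor, IsDistLawABC M.toTwoFunctor lam →
      ((ExtLaw4 M (PhiExt M.toTwoFunctor lam) ↔ LawD M lam) ∧
       (ExtLaw5 M (PhiExt M.toTwoFunctor lam) ↔ LawE M lam))) := by
  refine ⟨?_, ?_, ?_, ?_, ?_⟩
  · exact fun lam h => conj1 lam h
  · exact fun ext hext => conj2 ext hext
  · exact fun lam _ => conj3 lam
  · exact fun ext hext X Y φ => conj4 ext hext.1 φ
  · exact fun lam _ => conj5 lam

end QT
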